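/- Let u₁ = ∑_{k≥0} λ^k φ_{2k}/(2k)! and u₂ = ∑_{k≥0} λ^k φ_{2k+1}/(2k+1)!, where φ_k are the recursive integrals built from a nonvanishing C² solution f of f'' = q f on [a,b] with base point x₀. Then both series converge uniformly on [a,b], u₁ and u₂ satisfy u'' - q u = λ u, and u₁(x₀) = f(x₀), u₁'(x₀) = f'(x₀), u₂(x₀) = 0, u₂'(x₀) = 1/f(x₀). -/

import Mathlib

open Filter

/-- The recursive integrals `X̃⁽ⁿ⁾`. -/
noncomputable def Xt (f : ℝ → ℂ) (x₀ : ℝ) : ℕ → ℝ → ℂ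
  | 0 => fun _ => 1
  | n + 1 => fun x => (n + 1 : ℂ) * ∫ s in x₀..x, Xt f x₀ n s * (f s ^ 2) ^ ((-1 : ℤ) ^ n)

/-- The recursive integrals `X⁽ⁿ⁾`. -/
noncomputable def Xr (f : ℝ → ℂ) (x₀ : ℝ) : ℕ → ℝ → ℂ
  | 0 => fun _ => 1
  | n + 1 => fun x => (n + 1 : ℂ) * ∫ s in x₀..x, Xr f x₀ n s * (f s ^ 2) ^ ((-1 : ℤ) ^ (n + 1))

/-- The system `φ_k`. -/
noncomputable def phiSys (f : ℝ → ℂ) (x₀ : ℝ) (k : ℕ) (x : ℝ) : ℂ :=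
  if k % 2 = 1 then f x * Xr f x₀ k x else f x * Xt f x₀ k x

open Filter Set MeasureTheory intervalIntegral Topology
open scoped Interval

section SPPSHelpers

variable {a b x₀ : ℝ}


section Helpers

variable {a b x₀ : ℝ}

lemma my_uIcc_sub {x y : ℝ} (hx : x ∈ Icc a b) (hy : y ∈ Icc a b) :
    Set.uIcc x y ⊆ Icc a b := Set.uIcc_subset_Icc hx hy

lemma my_uIoc_sub {x y : ℝ} (hx : x ∈ Icc a b) (hy : y ∈ Icc a b) :
    Ι x y ⊆ Icc a b := Set.uIoc_subset_uIcc.trans (my_uIcc_sub hx hy)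

lemma prim_bound {w : ℝ → ℂ} {C : ℝ} {n : ℕ}
    (hw : ContinuousOn w (Icc a b)) (hx₀ : x₀ ∈ Icc a b) {x : ℝ} (hx : x ∈ Icc a b)
    (hC : 0 ≤ C) (hb : ∀ s ∈ Icc a b, ‖w s‖ ≤ C * |s - x₀| ^ n) :
    ‖∫ s in x₀..x, w s‖ ≤ C * |x - x₀| ^ (n + 1) / (n + 1) := by
  have hIsub : Ι x₀ x ⊆ Icc a b := my_uIoc_sub hx₀ hx
  have h1 : IntegrableOn (fun s => ‖w s‖) (Ι x₀ x) := by
    rw [← intervalIntegrable_iff]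
    exact ((hw.mono (my_uIcc_sub hx₀ hx)).norm).intervalIntegrable
  have h2 : IntegrableOn (fun s => C * |s - x₀| ^ n) (Ι x₀ x) := by
    rw [← intervalIntegrable_iff]
    exact (Continuous.intervalIntegrable (by continuity) _ _)
  calc ‖∫ s in x₀..x, w s‖ ≤ ∫ s in Ι x₀ x, ‖w s‖ := norm_integral_le_integral_norm_uIoc
    _ ≤ ∫ s in Ι x₀ x, C * |s - x₀| ^ n :=
        setIntegral_mono_on h1 h2 measurableSet_uIoc (fun s hs => hb s (hIsub hs))
    _ = C * ∫ s in Ι x₀ x, |s - x₀| ^ n := by rw [MeasureTheory.integral_const_mul]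
    _ = C * (|x - x₀| ^ (n + 1) / (n + 1)) := by rw [integral_pow_abs_sub_uIoc]
    _ = C * |x - x₀| ^ (n + 1) / (n + 1) := by ring

lemma prim_cont {w : ℝ → ℂ}
    (hw : ContinuousOn w (Icc a b)) (hx₀ : x₀ ∈ Icc a b) :
    ContinuousOn (fun x => ∫ s in x₀..x, w s) (Icc a b) := by
  obtain ⟨C, hC⟩ := IsCompact.exists_bound_of_continuousOn isCompact_Icc hw
  have hC0 : 0 ≤ C := le_trans (norm_nonneg _) (hC x₀ hx₀)
  apply (LipschitzOnWith.of_dist_le_mul (K := C.toNNReal) ?_).continuousOn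
  intro x hx y hy
  have hxy : (∫ s in x₀..x, w s) - (∫ s in x₀..y, w s) = ∫ s in y..x, w s :=
    integral_interval_sub_left ((hw.mono (my_uIcc_sub hx₀ hx)).intervalIntegrable)
      ((hw.mono (my_uIcc_sub hx₀ hy)).intervalIntegrable)
  rw [dist_eq_norm, hxy]
  calc ‖∫ s in y..x, w s‖ ≤ C * |x - y| :=
        norm_integral_le_of_norm_le_const (fun s hs => hC s (my_uIoc_sub hy hx hs))
    _ ≤ C.toNNReal * dist x y := by
        rw [Real.dist_eq]
        have : C ≤ (C.toNNReal : ℝ) := Real.le_coe_toNNReal C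
        exact mul_le_mul_of_nonneg_right this (abs_nonneg _)

end Helpers

/-- FTC for the primitive, within `Icc a b` at the base point `x₀`. -/
lemma prim_hasDerivWithinAt {w : ℝ → ℂ}
    (hw : ContinuousOn w (Icc a b)) (hx₀ : x₀ ∈ Icc a b) :
    HasDerivWithinAt (fun x => ∫ s in x₀..x, w s) (w x₀) (Icc a b) x₀ := by
  rw [hasDerivWithinAt_iff_isLittleO]
  rw [Asymptotics.isLittleO_iff]
  intro c hc
  obtain ⟨δ, hδ, hδ'⟩ := Metric.continuousWithinAt_iff.1 (hw x₀ hx₀) c hc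
  have hmem : {y | y ∈ Icc a b ∧ dist y x₀ < δ} ∈ 𝓝[Icc a b] x₀ := by
    apply Filter.inter_mem self_mem_nhdsWithin
    exact mem_nhdsWithin_of_mem_nhds (Metric.ball_mem_nhds x₀ hδ)
  filter_upwards [hmem] with x hx
  obtain ⟨hxI, hxd⟩ := hx
  have hint : IntervalIntegrable w volume x₀ x :=
    (hw.mono (my_uIcc_sub hx₀ hxI)).intervalIntegrable
  have key : (∫ s in x₀..x, w s) - (∫ s in x₀..x₀, w s) - (x - x₀) • w x₀
      = ∫ s in x₀..x, (w s - w x₀) := by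
    rw [intervalIntegral.integral_same, sub_zero,
      intervalIntegral.integral_sub hint intervalIntegrable_const,
      intervalIntegral.integral_const]
  rw [key]
  have hIb : ∀ s ∈ Ι x₀ x, ‖w s - w x₀‖ ≤ c := by
    intro s hs
    have hsI : s ∈ Icc a b := my_uIoc_sub hx₀ hxI hs
    have hsd : dist s x₀ < δ := by
      rcases le_total x₀ x with h | h
      · rw [Set.uIoc_of_le h] at hs
        rw [Real.dist_eq, abs_of_pos (by linarith [hs.1])]
        calc s - x₀ ≤ x - x₀ := by linarith [hs.2]
          _ ≤ |x - x₀| := le_abs_self _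
          _ < δ := by rwa [Real.dist_eq] at hxd
      · rw [Set.uIoc_of_ge h] at hs
        rw [Real.dist_eq, abs_of_nonpos (by linarith [hs.2])]
        calc -(s - x₀) ≤ -(x - x₀) := by linarith [hs.1]
          _ ≤ |x - x₀| := neg_le_abs _
          _ < δ := by rwa [Real.dist_eq] at hxd
    exact le_of_lt (by simpa [dist_eq_norm] using hδ' hsI hsd)
  calc ‖∫ s in x₀..x, (w s - w x₀)‖ ≤ c * |x - x₀| :=
        intervalIntegral.norm_integral_le_of_norm_le_const hIb
    _ = c * ‖x - x₀‖ := by rw [Real.norm_eq_abs]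

/-- FTC for the primitive at interior points. -/
lemma prim_hasDerivAt {w : ℝ → ℂ}
    (hw : ContinuousOn w (Icc a b)) (hx₀ : x₀ ∈ Icc a b) {x : ℝ} (hx : x ∈ Ioo a b) :
    HasDerivAt (fun y => ∫ s in x₀..y, w s) (w x) x := by
  have hxI : x ∈ Icc a b := Ioo_subset_Icc_self hx
  apply intervalIntegral.integral_hasDerivAt_right
    ((hw.mono (my_uIcc_sub hx₀ hxI)).intervalIntegrable)
  · exact (hw.mono Ioo_subset_Icc_self).stronglyMeasurableAtFilter isOpen_Ioo x hx
  · exact (hw x hxI).continuousAt (Icc_mem_nhds hx.1 hx.2)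

/-- Interchange of sum and interval integral. -/
lemma swap_sum_integral {h : ℕ → ℝ → ℂ} {u : ℕ → ℝ}
    (hx₀ : x₀ ∈ Icc a b) {x : ℝ} (hx : x ∈ Icc a b)
    (hc : ∀ k, ContinuousOn (h k) (Icc a b))
    (hbd : ∀ k, ∀ s ∈ Icc a b, ‖h k s‖ ≤ u k) (hu : Summable u) :
    ∫ s in x₀..x, (∑' k, h k s) = ∑' k, ∫ s in x₀..x, h k s := by
  have hIsub : Ι x₀ x ⊆ Icc a b := my_uIoc_sub hx₀ hx
  have hu0 : ∀ k, 0 ≤ u k := fun k => le_trans (norm_nonneg _) (hbd k x₀ hx₀)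
  have key : HasSum (fun k => ∫ s in x₀..x, h k s) (∫ s in x₀..x, ∑' k, h k s) := by
    apply _root_.intervalIntegral.hasSum_integral_of_dominated_convergence (fun k _ => u k)
    · exact fun k => ((hc k).mono hIsub).aestronglyMeasurable measurableSet_uIoc
    · intro k; filter_upwards with t ht; exact hbd k t (hIsub ht)
    · filter_upwards with t _; exact hu
    · exact intervalIntegrable_const
    · filter_upwards with t ht
      exact (Summable.of_norm_bounded hu fun k => hbd k t (hIsub ht)).hasSum
  exact key.tsum_eq.symm

/-- Continuity of the sum of a uniformly convergent series on `Icc`. -/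
lemma tsum_contOn {h : ℕ → ℝ → ℂ} {u : ℕ → ℝ}
    (hc : ∀ k, ContinuousOn (h k) (Icc a b))
    (hbd : ∀ k, ∀ s ∈ Icc a b, ‖h k s‖ ≤ u k) (hu : Summable u) :
    ContinuousOn (fun x => ∑' k, h k x) (Icc a b) :=
  (tendstoUniformlyOn_tsum hu hbd).continuousOn
    (Eventually.of_forall fun N => continuousOn_finset_sum _ fun i _ => hc i).frequently

lemma rec_cont_bound {Z g : ℕ → ℝ → ℂ} {M : ℝ}
    (hx₀ : x₀ ∈ Icc a b)
    (hZ0 : ∀ x, Z 0 x = 1)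
    (hZs : ∀ n x, Z (n+1) x = ((n : ℂ) + 1) * ∫ s in x₀..x, Z n s * g n s)
    (hg : ∀ n, ContinuousOn (g n) (Icc a b))
    (hM : ∀ n, ∀ s ∈ Icc a b, ‖g n s‖ ≤ M) :
    ∀ n, ContinuousOn (Z n) (Icc a b) ∧ ∀ x ∈ Icc a b, ‖Z n x‖ ≤ (M * |x - x₀|) ^ n := by
  have hM0 : 0 ≤ M := le_trans (norm_nonneg _) (hM 0 x₀ hx₀)
  intro n
  induction n with
  | zero =>
    refine ⟨?_, ?_⟩
    · have : Z 0 = fun _ => 1 := funext hZ0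
      rw [this]; exact continuousOn_const
    · intro x _; simp [hZ0 x]
  | succ n ih =>
    have hw : ContinuousOn (fun s => Z n s * g n s) (Icc a b) := ih.1.mul (hg n)
    have hwb : ∀ s ∈ Icc a b, ‖Z n s * g n s‖ ≤ M ^ (n+1) * |s - x₀| ^ n := by
      intro s hs
      rw [norm_mul]
      calc ‖Z n s‖ * ‖g n s‖ ≤ (M * |s - x₀|) ^ n * M :=
            mul_le_mul (ih.2 s hs) (hM n s hs) (norm_nonneg _) (by positivity)
        _ = M ^ (n+1) * |s - x₀| ^ n := by rw [mul_pow]; ring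
    refine ⟨?_, ?_⟩
    · have hcont : ContinuousOn (fun x => ∫ s in x₀..x, Z n s * g n s) (Icc a b) :=
        prim_cont hw hx₀
      have heq : Z (n+1) = fun x => ((n:ℂ)+1) * ∫ s in x₀..x, Z n s * g n s :=
        funext (hZs n)
      rw [heq]; exact continuousOn_const.mul hcont
    · intro x hx
      rw [hZs n x, norm_mul]
      have h1 : ‖((n:ℂ)+1)‖ = (n:ℝ) + 1 := by
        have : ((n:ℂ)+1) = ((n+1 : ℕ) : ℂ) := by push_cast; ring
        rw [this, Complex.norm_natCast]; push_cast; ring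
      have h2 := prim_bound hw hx₀ hx (by positivity) hwb
      have hn1 : (0:ℝ) < (n:ℝ) + 1 := by positivity
      calc ‖((n:ℂ)+1)‖ * ‖∫ s in x₀..x, Z n s * g n s‖
          ≤ ((n:ℝ)+1) * (M ^ (n+1) * |x - x₀| ^ (n+1) / ((n:ℝ)+1)) := by
            rw [h1]; exact mul_le_mul_of_nonneg_left (by exact_mod_cast h2) (by positivity)
        _ = (M * |x - x₀|) ^ (n+1) := by field_simp [mul_pow]; ring
lemma ode_solution {a b x₀ : ℝ} (hx₀ : x₀ ∈ Icc a b)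
    {q f : ℝ → ℂ} {lam c₁ c₂ : ℂ}
    (hf : ContDiffOn ℝ 2 f (Set.Icc a b))
    (hf0 : ∀ x ∈ Set.Icc a b, f x ≠ 0)
    (hfq : ∀ x ∈ Set.Icc a b, deriv (deriv f) x = q x * f x)
    {S G u : ℝ → ℂ}
    (hSc : ContinuousOn S (Icc a b)) (hGc : ContinuousOn G (Icc a b))
    (hE1 : ∀ x ∈ Icc a b, S x = c₁ + ∫ s in x₀..x, (f s ^ 2)⁻¹ * G s)
    (hE2 : ∀ x ∈ Icc a b, G x = c₂ + lam * ∫ s in x₀..x, f s ^ 2 * S s)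
    (hu : ∀ x ∈ Icc a b, u x = f x * S x) :
    ∀ x ∈ Ioo a b, deriv (deriv u) x - q x * u x = lam * u x := by
  have hfc : ContinuousOn f (Icc a b) := hf.continuousOn
  have hf2 : ContinuousOn (fun s => f s ^ 2) (Icc a b) := hfc.pow 2
  have hf2i : ContinuousOn (fun s => (f s ^ 2)⁻¹) (Icc a b) :=
    hf2.inv₀ fun x hx => pow_ne_zero 2 (hf0 x hx)
  have hw : ContinuousOn (fun s => (f s ^ 2)⁻¹ * G s) (Icc a b) := hf2i.mul hGc
  have hv : ContinuousOn (fun s => f s ^ 2 * S s) (Icc a b) := hf2.mul hSc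
  have hSd : ∀ y ∈ Ioo a b, HasDerivAt S ((f y ^ 2)⁻¹ * G y) y := by
    intro y hy
    exact ((prim_hasDerivAt hw hx₀ hy).const_add c₁).congr_of_eventuallyEq
      (eventuallyEq_of_mem (Icc_mem_nhds hy.1 hy.2) hE1)
  have hGd : ∀ y ∈ Ioo a b, HasDerivAt G (lam * (f y ^ 2 * S y)) y := by
    intro y hy
    exact (((prim_hasDerivAt hv hx₀ hy).const_mul lam).const_add c₂).congr_of_eventuallyEq
      (eventuallyEq_of_mem (Icc_mem_nhds hy.1 hy.2) hE2)
  have hfd : ∀ y ∈ Ioo a b, HasDerivAt f (deriv f y) y := fun y hy =>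
    ((hf.contDiffAt (Icc_mem_nhds hy.1 hy.2)).differentiableAt (by norm_num)).hasDerivAt
  have h1 : ContDiffOn ℝ 1 (deriv f) (Ioo a b) :=
    (hf.mono Ioo_subset_Icc_self).deriv_of_isOpen isOpen_Ioo (by norm_num)
  have hfd2 : ∀ y ∈ Ioo a b, HasDerivAt (deriv f) (deriv (deriv f) y) y := fun y hy =>
    ((h1.differentiableOn one_ne_zero y hy).differentiableAt (isOpen_Ioo.mem_nhds hy)).hasDerivAt
  have hud : ∀ y ∈ Ioo a b, HasDerivAt u (deriv f y * S y + (f y)⁻¹ * G y) y := by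
    intro y hy
    have hyI := Ioo_subset_Icc_self hy
    have hfy := hf0 y hyI
    have h2 : HasDerivAt u (deriv f y * S y + f y * ((f y ^ 2)⁻¹ * G y)) y :=
      ((hfd y hy).mul (hSd y hy)).congr_of_eventuallyEq
        (eventuallyEq_of_mem (Icc_mem_nhds hy.1 hy.2) hu)
    have heq : f y * ((f y ^ 2)⁻¹ * G y) = (f y)⁻¹ * G y := by
      rw [sq]; field_simp
    rw [← heq]; exact h2
  intro x hx
  have hxI := Ioo_subset_Icc_self hx
  have hfx := hf0 x hxI
  have hD : deriv u =ᶠ[𝓝 x] fun y => deriv f y * S y + (f y)⁻¹ * G y :=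
    eventuallyEq_of_mem (isOpen_Ioo.mem_nhds hx) fun y hy => (hud y hy).deriv
  have t1 : HasDerivAt (fun y => deriv f y * S y)
      (deriv (deriv f) x * S x + deriv f x * ((f x ^ 2)⁻¹ * G x)) x :=
    (hfd2 x hx).mul (hSd x hx)
  have tinv : HasDerivAt (fun y => (f y)⁻¹) (-deriv f x / f x ^ 2) x := by
    have := (hasDerivAt_const x (1:ℂ)).div (hfd x hx) hfx
    simp only [Pi.div_def, one_div] at this
    rw [show -deriv f x / f x ^ 2 = (0 * f x - 1 * deriv f x) / f x ^ 2 by ring]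
    exact this
  have t2 : HasDerivAt (fun y => (f y)⁻¹ * G y)
      ((-deriv f x / f x ^ 2) * G x + (f x)⁻¹ * (lam * (f x ^ 2 * S x))) x :=
    tinv.mul (hGd x hx)
  have tD := t1.add t2
  have hd2u : deriv (deriv u) x =
      (deriv (deriv f) x * S x + deriv f x * ((f x ^ 2)⁻¹ * G x)) +
      ((-deriv f x / f x ^ 2) * G x + (f x)⁻¹ * (lam * (f x ^ 2 * S x))) := by
    exact (tD.congr_of_eventuallyEq hD).deriv
  rw [hd2u, hu x hxI, hfq x hxI]
  field_simp
  ring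

lemma neg_one_pow_two_mul (k : ℕ) : ((-1:ℤ)) ^ (2*k) = 1 := by
  rw [pow_mul]; norm_num

lemma neg_one_pow_two_mul_add_one (k : ℕ) : ((-1:ℤ)) ^ (2*k+1) = -1 := by
  rw [pow_succ, neg_one_pow_two_mul]; norm_num

end SPPSHelpers
section XtXr

variable {a b x₀ : ℝ}

lemma Xt_zero (f : ℝ → ℂ) (x₀ x : ℝ) : Xt f x₀ 0 x = 1 := rfl

lemma Xt_succ (f : ℝ → ℂ) (x₀ : ℝ) (n : ℕ) (x : ℝ) :
    Xt f x₀ (n+1) x = ((n:ℂ) + 1) * ∫ s in x₀..x, Xt f x₀ n s * (f s ^ 2) ^ ((-1:ℤ) ^ n) := by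
  simp [Xt]

lemma Xr_zero (f : ℝ → ℂ) (x₀ x : ℝ) : Xr f x₀ 0 x = 1 := rfl

lemma Xr_succ (f : ℝ → ℂ) (x₀ : ℝ) (n : ℕ) (x : ℝ) :
    Xr f x₀ (n+1) x = ((n:ℂ) + 1) * ∫ s in x₀..x, Xr f x₀ n s * (f s ^ 2) ^ ((-1:ℤ) ^ (n+1)) := by
  simp [Xr]

lemma Xt_succ_base (f : ℝ → ℂ) (x₀ : ℝ) (n : ℕ) : Xt f x₀ (n+1) x₀ = 0 := by
  rw [Xt_succ]; simp

lemma Xr_succ_base (f : ℝ → ℂ) (x₀ : ℝ) (n : ℕ) : Xr f x₀ (n+1) x₀ = 0 := by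
  rw [Xr_succ]; simp

lemma Xt_int_step (f : ℝ → ℂ) (x₀ : ℝ) (n : ℕ) (x : ℝ) :
    (∫ s in x₀..x, Xt f x₀ n s * (f s ^ 2) ^ ((-1:ℤ) ^ n))
      = Xt f x₀ (n+1) x / ((n:ℂ) + 1) := by
  rw [eq_div_iff (Nat.cast_add_one_ne_zero n), Xt_succ]; ring

lemma Xr_int_step (f : ℝ → ℂ) (x₀ : ℝ) (n : ℕ) (x : ℝ) :
    (∫ s in x₀..x, Xr f x₀ n s * (f s ^ 2) ^ ((-1:ℤ) ^ (n+1)))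
      = Xr f x₀ (n+1) x / ((n:ℂ) + 1) := by
  rw [eq_div_iff (Nat.cast_add_one_ne_zero n), Xr_succ]; ring

lemma phiSys_even (f : ℝ → ℂ) (x₀ : ℝ) (k : ℕ) (x : ℝ) :
    phiSys f x₀ (2*k) x = f x * Xt f x₀ (2*k) x := by
  have h : ¬ ((2*k) % 2 = 1) := by omega
  simp [phiSys, h]

lemma phiSys_odd (f : ℝ → ℂ) (x₀ : ℝ) (k : ℕ) (x : ℝ) :
    phiSys f x₀ (2*k+1) x = f x * Xr f x₀ (2*k+1) x := by
  have h : (2*k+1) % 2 = 1 := by omega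
  simp [phiSys, h]

end XtXr

set_option maxHeartbeats 2000000

theorem stmt_10 (a b x₀ : ℝ) (hab : a < b) (hx₀ : x₀ ∈ Set.Icc a b)
    (q f : ℝ → ℂ) (lam : ℂ)
    (hq : ContinuousOn q (Set.Icc a b))
    (hf : ContDiffOn ℝ 2 f (Set.Icc a b))
    (hf0 : ∀ x ∈ Set.Icc a b, f x ≠ 0)
    (hfq : ∀ x ∈ Set.Icc a b, deriv (deriv f) x = q x * f x) :
    ∃ u₁ u₂ : ℝ → ℂ,
      TendstoUniformlyOn
        (fun N x => ∑ k ∈ Finset.range (N + 1),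
          lam ^ k / ((2 * k).factorial : ℂ) * phiSys f x₀ (2 * k) x)
        u₁ atTop (Set.Icc a b) ∧
      TendstoUniformlyOn
        (fun N x => ∑ k ∈ Finset.range (N + 1),
          lam ^ k / ((2 * k + 1).factorial : ℂ) * phiSys f x₀ (2 * k + 1) x)
        u₂ atTop (Set.Icc a b) ∧
      (∀ x ∈ Set.Ioo a b, deriv (deriv u₁) x - q x * u₁ x = lam * u₁ x) ∧
      (∀ x ∈ Set.Ioo a b, deriv (deriv u₂) x - q x * u₂ x = lam * u₂ x) ∧
      u₁ x₀ = f x₀ ∧ deriv u₁ x₀ = deriv f x₀ ∧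
      u₂ x₀ = 0 ∧ deriv u₂ x₀ = 1 / f x₀ := by
  classical
  -- basic continuity facts
  have hfc : ContinuousOn f (Icc a b) := hf.continuousOn
  have hf2c : ContinuousOn (fun s => f s ^ 2) (Icc a b) := hfc.pow 2
  have hf2ic : ContinuousOn (fun s => (f s ^ 2)⁻¹) (Icc a b) :=
    hf2c.inv₀ fun x hx => pow_ne_zero 2 (hf0 x hx)
  obtain ⟨M1, hM1⟩ := isCompact_Icc.exists_bound_of_continuousOn hf2c
  obtain ⟨M2, hM2⟩ := isCompact_Icc.exists_bound_of_continuousOn hf2ic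
  obtain ⟨M0, hM0⟩ := isCompact_Icc.exists_bound_of_continuousOn hfc
  set M : ℝ := max M1 M2 with hMdef
  have hM0nn : 0 ≤ M0 := le_trans (norm_nonneg _) (hM0 x₀ hx₀)
  have hMnn : 0 ≤ M := le_trans (norm_nonneg _) ((hM1 x₀ hx₀).trans (le_max_left _ _))
  -- the alternating weight family
  have hg : ∀ n : ℕ, ContinuousOn (fun s => (f s ^ 2) ^ ((-1:ℤ) ^ n)) (Icc a b) ∧
      ∀ s ∈ Icc a b, ‖(f s ^ 2) ^ ((-1:ℤ) ^ n)‖ ≤ M := by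
    intro n
    rcases Nat.even_or_odd n with he | ho
    · simp only [he.neg_one_pow, zpow_one]
      exact ⟨hf2c, fun s hs => (hM1 s hs).trans (le_max_left _ _)⟩
    · simp only [ho.neg_one_pow, zpow_neg_one]
      exact ⟨hf2ic, fun s hs => (hM2 s hs).trans (le_max_right _ _)⟩
  -- continuity and bounds for Xt and Xr
  have hXt : ∀ n, ContinuousOn (Xt f x₀ n) (Icc a b) ∧
      ∀ x ∈ Icc a b, ‖Xt f x₀ n x‖ ≤ (M * |x - x₀|) ^ n :=
    rec_cont_bound hx₀ (fun x => Xt_zero f x₀ x) (fun n x => Xt_succ f x₀ n x)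
      (fun n => (hg n).1) (fun n => (hg n).2)
  have hXr : ∀ n, ContinuousOn (Xr f x₀ n) (Icc a b) ∧
      ∀ x ∈ Icc a b, ‖Xr f x₀ n x‖ ≤ (M * |x - x₀|) ^ n :=
    rec_cont_bound hx₀ (fun x => Xr_zero f x₀ x) (fun n x => Xr_succ f x₀ n x)
      (fun n => (hg (n+1)).1) (fun n => (hg (n+1)).2)
  set A : ℝ := M * (b - a) with hAdef
  have hA0 : 0 ≤ A := mul_nonneg hMnn (by linarith)
  have habs : ∀ x ∈ Icc a b, |x - x₀| ≤ b - a := by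
    intro x hx
    obtain ⟨h1, h2⟩ := hx; obtain ⟨h3, h4⟩ := hx₀
    rw [abs_le]; constructor <;> linarith
  have hXtb : ∀ n, ∀ x ∈ Icc a b, ‖Xt f x₀ n x‖ ≤ A ^ n := by
    intro n x hx
    exact ((hXt n).2 x hx).trans
      (pow_le_pow_left₀ (by positivity) (mul_le_mul_of_nonneg_left (habs x hx) hMnn) n)
  have hXrb : ∀ n, ∀ x ∈ Icc a b, ‖Xr f x₀ n x‖ ≤ A ^ n := by
    intro n x hx
    exact ((hXr n).2 x hx).trans
      (pow_le_pow_left₀ (by positivity) (mul_le_mul_of_nonneg_left (habs x hx) hMnn) n)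
  -- the summable majorant
  set t : ℝ := (1 + ‖lam‖) * (1 + A) with htdef
  have hkey : ∀ j k : ℕ, j ≤ k → ‖lam‖ ^ j * A ^ k ≤ t ^ k := by
    intro j k hjk
    have h1 : ‖lam‖ ^ j ≤ (1 + ‖lam‖) ^ k :=
      le_trans (pow_le_pow_left₀ (norm_nonneg _) (by linarith) j)
        (pow_le_pow_right₀ (by linarith [norm_nonneg lam]) hjk)
    have h2 : A ^ k ≤ (1 + A) ^ k := pow_le_pow_left₀ hA0 (by linarith) k
    calc ‖lam‖ ^ j * A ^ k ≤ (1 + ‖lam‖) ^ k * (1 + A) ^ k :=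
          mul_le_mul h1 h2 (by positivity) (by positivity)
      _ = t ^ k := (mul_pow _ _ _).symm
  have hsumE : Summable (fun k : ℕ => t ^ (2*k) / (2*k).factorial) :=
    (Real.summable_pow_div_factorial t).comp_injective
      (fun k1 k2 h => by dsimp only at h; omega : Function.Injective (fun k : ℕ => 2*k))
  have hsumO : Summable (fun k : ℕ => t ^ (2*k+1) / (2*k+1).factorial) :=
    (Real.summable_pow_div_factorial t).comp_injective
      (fun k1 k2 h => by dsimp only at h; omega : Function.Injective (fun k : ℕ => 2*k+1))
  have hfacpos : ∀ m : ℕ, (0:ℝ) < m.factorial := fun m => by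
    exact_mod_cast m.factorial_pos
  -- bounds for the series terms
  have hcoef_bd : ∀ (j m : ℕ), j ≤ m → ∀ (Z : ℝ → ℂ), (∀ y ∈ Icc a b, ‖Z y‖ ≤ A ^ m) →
      ∀ y ∈ Icc a b, ‖lam ^ j / (m.factorial : ℂ) * Z y‖ ≤ t ^ m / m.factorial := by
    intro j m hjm Z hZ y hy
    rw [norm_mul, norm_div, norm_pow, Complex.norm_natCast]
    calc ‖lam‖ ^ j / m.factorial * ‖Z y‖ ≤ ‖lam‖ ^ j / m.factorial * A ^ m := by
          gcongr; exact hZ y hy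
      _ = ‖lam‖ ^ j * A ^ m / m.factorial := by ring
      _ ≤ t ^ m / m.factorial := (div_le_div_iff_of_pos_right (hfacpos m)).2 (hkey j m hjm)
  have hprod_bd : ∀ (j m : ℕ), j ≤ m → ∀ (Z w : ℝ → ℂ), (∀ y ∈ Icc a b, ‖Z y‖ ≤ A ^ m) →
      (∀ y ∈ Icc a b, ‖w y‖ ≤ M) → ∀ y ∈ Icc a b,
      ‖lam ^ j / (m.factorial : ℂ) * (Z y * w y)‖ ≤ M * (t ^ m / m.factorial) := by
    intro j m hjm Z w hZ hw y hy
    rw [norm_mul, norm_mul, norm_div, norm_pow, Complex.norm_natCast]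
    calc ‖lam‖ ^ j / m.factorial * (‖Z y‖ * ‖w y‖)
        ≤ ‖lam‖ ^ j / m.factorial * (A ^ m * M) := by
          gcongr
          · exact hZ y hy
          · exact hw y hy
      _ = M * (‖lam‖ ^ j * A ^ m / m.factorial) := by ring
      _ ≤ M * (t ^ m / m.factorial) :=
          mul_le_mul_of_nonneg_left ((div_le_div_iff_of_pos_right (hfacpos m)).2 (hkey j m hjm)) hMnn
  have hfprod_bd : ∀ (j m : ℕ), j ≤ m → ∀ (Z : ℝ → ℂ), (∀ y ∈ Icc a b, ‖Z y‖ ≤ A ^ m) →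
      ∀ y ∈ Icc a b,
      ‖lam ^ j / (m.factorial : ℂ) * (f y * Z y)‖ ≤ M0 * (t ^ m / m.factorial) := by
    intro j m hjm Z hZ y hy
    rw [norm_mul, norm_mul, norm_div, norm_pow, Complex.norm_natCast]
    calc ‖lam‖ ^ j / m.factorial * (‖f y‖ * ‖Z y‖)
        ≤ ‖lam‖ ^ j / m.factorial * (M0 * A ^ m) := by
          gcongr
          · exact hM0 y hy
          · exact hZ y hy
      _ = M0 * (‖lam‖ ^ j * A ^ m / m.factorial) := by ring
      _ ≤ M0 * (t ^ m / m.factorial) :=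
          mul_le_mul_of_nonneg_left ((div_le_div_iff_of_pos_right (hfacpos m)).2 (hkey j m hjm)) hM0nn
  -- the four auxiliary series
  set S₁ : ℝ → ℂ := fun x => ∑' k : ℕ, lam ^ k / ((2 * k).factorial : ℂ) * Xt f x₀ (2*k) x
    with hS₁def
  set G₁ : ℝ → ℂ := fun x => ∑' k : ℕ, lam ^ (k+1) / ((2*k+1).factorial : ℂ) * Xt f x₀ (2*k+1) x
    with hG₁def
  set S₂ : ℝ → ℂ := fun x => ∑' k : ℕ, lam ^ k / ((2 * k + 1).factorial : ℂ) * Xr f x₀ (2*k+1) x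
    with hS₂def
  set G₂ : ℝ → ℂ := fun x => ∑' k : ℕ, lam ^ k / ((2 * k).factorial : ℂ) * Xr f x₀ (2*k) x
    with hG₂def
  -- term bounds
  have hb1 : ∀ k : ℕ, ∀ y ∈ Icc a b,
      ‖lam ^ k / ((2 * k).factorial : ℂ) * Xt f x₀ (2*k) y‖ ≤ t ^ (2*k) / (2*k).factorial :=
    fun k => hcoef_bd k (2*k) (by omega) _ (hXtb (2*k))
  have hb2 : ∀ k : ℕ, ∀ y ∈ Icc a b,
      ‖lam ^ (k+1) / ((2*k+1).factorial : ℂ) * Xt f x₀ (2*k+1) y‖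
        ≤ t ^ (2*k+1) / (2*k+1).factorial :=
    fun k => hcoef_bd (k+1) (2*k+1) (by omega) _ (hXtb (2*k+1))
  have hb3 : ∀ k : ℕ, ∀ y ∈ Icc a b,
      ‖lam ^ k / ((2 * k + 1).factorial : ℂ) * Xr f x₀ (2*k+1) y‖
        ≤ t ^ (2*k+1) / (2*k+1).factorial :=
    fun k => hcoef_bd k (2*k+1) (by omega) _ (hXrb (2*k+1))
  have hb4 : ∀ k : ℕ, ∀ y ∈ Icc a b,
      ‖lam ^ k / ((2 * k).factorial : ℂ) * Xr f x₀ (2*k) y‖ ≤ t ^ (2*k) / (2*k).factorial :=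
    fun k => hcoef_bd k (2*k) (by omega) _ (hXrb (2*k))
  -- continuity of the sums
  have hS₁c : ContinuousOn S₁ (Icc a b) := by
    simp only [hS₁def]
    exact tsum_contOn (fun k => continuousOn_const.mul (hXt (2*k)).1) hb1 hsumE
  have hG₁c : ContinuousOn G₁ (Icc a b) := by
    simp only [hG₁def]
    exact tsum_contOn (fun k => continuousOn_const.mul (hXt (2*k+1)).1) hb2 hsumO
  have hS₂c : ContinuousOn S₂ (Icc a b) := by
    simp only [hS₂def]
    exact tsum_contOn (fun k => continuousOn_const.mul (hXr (2*k+1)).1) hb3 hsumO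
  have hG₂c : ContinuousOn G₂ (Icc a b) := by
    simp only [hG₂def]
    exact tsum_contOn (fun k => continuousOn_const.mul (hXr (2*k)).1) hb4 hsumE
  -- values at the base point
  have hS₁x₀ : S₁ x₀ = 1 := by
    simp only [hS₁def]
    rw [tsum_eq_single 0 ?_]
    · simp [Xt_zero]
    · intro k hk
      have h2k : 2*k = (2*k - 1) + 1 := by omega
      rw [h2k, Xt_succ_base]; ring
  have hG₁x₀ : G₁ x₀ = 0 := by
    simp only [hG₁def]
    have : ∀ k : ℕ, lam ^ (k+1) / ((2*k+1).factorial : ℂ) * Xt f x₀ (2*k+1) x₀ = 0 := by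
      intro k; rw [Xt_succ_base]; ring
    simp only [this]; exact tsum_zero
  have hS₂x₀ : S₂ x₀ = 0 := by
    simp only [hS₂def]
    have : ∀ k : ℕ, lam ^ k / ((2 * k + 1).factorial : ℂ) * Xr f x₀ (2*k+1) x₀ = 0 := by
      intro k; rw [Xr_succ_base]; ring
    simp only [this]; exact tsum_zero
  have hG₂x₀ : G₂ x₀ = 1 := by
    simp only [hG₂def]
    rw [tsum_eq_single 0 ?_]
    · simp [Xr_zero]
    · intro k hk
      have h2k : 2*k = (2*k - 1) + 1 := by omega
      rw [h2k, Xr_succ_base]; ring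
  -- the integral equations
  have hE2 : ∀ x ∈ Icc a b, G₁ x = 0 + lam * ∫ s in x₀..x, f s ^ 2 * S₁ s := by
    intro x hx
    have key : (∫ s in x₀..x, f s ^ 2 * S₁ s)
        = ∑' k : ℕ, lam ^ k / ((2 * k).factorial : ℂ) * (Xt f x₀ (2*k+1) x / (((2*k : ℕ):ℂ) + 1)) := by
      have hptw : ∀ s : ℝ, f s ^ 2 * S₁ s = ∑' k : ℕ, lam ^ k / ((2 * k).factorial : ℂ) *
          (Xt f x₀ (2*k) s * (f s ^ 2) ^ ((-1:ℤ) ^ (2*k))) := by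
        intro s
        simp only [hS₁def]
        rw [← tsum_mul_left]
        exact tsum_congr fun k => by rw [neg_one_pow_two_mul, zpow_one]; ring
      calc (∫ s in x₀..x, f s ^ 2 * S₁ s)
          = ∫ s in x₀..x, ∑' k : ℕ, lam ^ k / ((2 * k).factorial : ℂ) *
              (Xt f x₀ (2*k) s * (f s ^ 2) ^ ((-1:ℤ) ^ (2*k))) := by
            simp only [hptw]
        _ = ∑' k : ℕ, ∫ s in x₀..x, lam ^ k / ((2 * k).factorial : ℂ) *
              (Xt f x₀ (2*k) s * (f s ^ 2) ^ ((-1:ℤ) ^ (2*k))) := by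
            apply swap_sum_integral hx₀ hx
              (fun k => continuousOn_const.mul ((hXt (2*k)).1.mul (hg (2*k)).1))
              (fun k => hprod_bd k (2*k) (by omega) _ _ (hXtb (2*k)) (hg (2*k)).2)
              (hsumE.mul_left M)
        _ = ∑' k : ℕ, lam ^ k / ((2 * k).factorial : ℂ) *
              (Xt f x₀ (2*k+1) x / (((2*k : ℕ):ℂ) + 1)) := by
            exact tsum_congr fun k => by
              rw [intervalIntegral.integral_const_mul, Xt_int_step]
    rw [zero_add, key, ← tsum_mul_left]
    simp only [hG₁def]
    refine tsum_congr fun k => ?_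
    have hfac : ((2*k+1).factorial : ℂ) = (((2*k : ℕ):ℂ) + 1) * ((2*k).factorial : ℂ) := by
      rw [Nat.factorial_succ]; push_cast; ring
    have hne1 : (((2*k : ℕ):ℂ) + 1) ≠ 0 := Nat.cast_add_one_ne_zero _
    have hne2 : (((2*k).factorial : ℕ) : ℂ) ≠ 0 := Nat.cast_ne_zero.2 (2*k).factorial_ne_zero
    rw [hfac]
    field_simp
    ring
  have hE1 : ∀ x ∈ Icc a b, S₁ x = 1 + ∫ s in x₀..x, (f s ^ 2)⁻¹ * G₁ s := by
    intro x hx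
    have key : (∫ s in x₀..x, (f s ^ 2)⁻¹ * G₁ s)
        = ∑' k : ℕ, lam ^ (k+1) / ((2*k+1).factorial : ℂ) *
            (Xt f x₀ (2*k+1+1) x / (((2*k+1 : ℕ):ℂ) + 1)) := by
      have hptw : ∀ s : ℝ, (f s ^ 2)⁻¹ * G₁ s = ∑' k : ℕ, lam ^ (k+1) / ((2*k+1).factorial : ℂ) *
          (Xt f x₀ (2*k+1) s * (f s ^ 2) ^ ((-1:ℤ) ^ (2*k+1))) := by
        intro s
        simp only [hG₁def]
        rw [← tsum_mul_left]
        exact tsum_congr fun k => by rw [neg_one_pow_two_mul_add_one, zpow_neg_one]; ring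
      calc (∫ s in x₀..x, (f s ^ 2)⁻¹ * G₁ s)
          = ∫ s in x₀..x, ∑' k : ℕ, lam ^ (k+1) / ((2*k+1).factorial : ℂ) *
              (Xt f x₀ (2*k+1) s * (f s ^ 2) ^ ((-1:ℤ) ^ (2*k+1))) := by
            simp only [hptw]
        _ = ∑' k : ℕ, ∫ s in x₀..x, lam ^ (k+1) / ((2*k+1).factorial : ℂ) *
              (Xt f x₀ (2*k+1) s * (f s ^ 2) ^ ((-1:ℤ) ^ (2*k+1))) := by
            apply swap_sum_integral hx₀ hx
              (fun k => continuousOn_const.mul ((hXt (2*k+1)).1.mul (hg (2*k+1)).1))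
              (fun k => hprod_bd (k+1) (2*k+1) (by omega) _ _ (hXtb (2*k+1)) (hg (2*k+1)).2)
              (hsumO.mul_left M)
        _ = _ := by
            exact tsum_congr fun k => by
              rw [intervalIntegral.integral_const_mul, Xt_int_step]
    have hsum : Summable (fun k : ℕ => lam ^ k / ((2 * k).factorial : ℂ) * Xt f x₀ (2*k) x) :=
      Summable.of_norm_bounded hsumE (fun k => hb1 k x hx)
    simp only [hS₁def]
    show (∑' k : ℕ, lam ^ k / ((2 * k).factorial : ℂ) * Xt f x₀ (2*k) x) = _
    rw [hsum.tsum_eq_zero_add, key]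
    congr 1
    · simp [Xt_zero]
    · refine tsum_congr fun k => ?_
      have h2k : 2*(k+1) = 2*k+1+1 := by ring
      rw [h2k]
      have hfac : ((2*k+1+1).factorial : ℂ) = (((2*k+1 : ℕ):ℂ) + 1) * ((2*k+1).factorial : ℂ) := by
        rw [Nat.factorial_succ]; push_cast; ring
      have hne1 : (((2*k+1 : ℕ):ℂ) + 1) ≠ 0 := Nat.cast_add_one_ne_zero _
      have hne2 : (((2*k+1).factorial : ℕ) : ℂ) ≠ 0 := Nat.cast_ne_zero.2 (2*k+1).factorial_ne_zero
      rw [hfac]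
      field_simp
  have hE1' : ∀ x ∈ Icc a b, S₂ x = 0 + ∫ s in x₀..x, (f s ^ 2)⁻¹ * G₂ s := by
    intro x hx
    have key : (∫ s in x₀..x, (f s ^ 2)⁻¹ * G₂ s)
        = ∑' k : ℕ, lam ^ k / ((2 * k).factorial : ℂ) *
            (Xr f x₀ (2*k+1) x / (((2*k : ℕ):ℂ) + 1)) := by
      have hptw : ∀ s : ℝ, (f s ^ 2)⁻¹ * G₂ s = ∑' k : ℕ, lam ^ k / ((2 * k).factorial : ℂ) *
          (Xr f x₀ (2*k) s * (f s ^ 2) ^ ((-1:ℤ) ^ (2*k+1))) := by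
        intro s
        simp only [hG₂def]
        rw [← tsum_mul_left]
        exact tsum_congr fun k => by rw [neg_one_pow_two_mul_add_one, zpow_neg_one]; ring
      calc (∫ s in x₀..x, (f s ^ 2)⁻¹ * G₂ s)
          = ∫ s in x₀..x, ∑' k : ℕ, lam ^ k / ((2 * k).factorial : ℂ) *
              (Xr f x₀ (2*k) s * (f s ^ 2) ^ ((-1:ℤ) ^ (2*k+1))) := by
            simp only [hptw]
        _ = ∑' k : ℕ, ∫ s in x₀..x, lam ^ k / ((2 * k).factorial : ℂ) *
              (Xr f x₀ (2*k) s * (f s ^ 2) ^ ((-1:ℤ) ^ (2*k+1))) := by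
            apply swap_sum_integral hx₀ hx
              (fun k => continuousOn_const.mul ((hXr (2*k)).1.mul (hg (2*k+1)).1))
              (fun k => hprod_bd k (2*k) (by omega) _ _ (hXrb (2*k)) (hg (2*k+1)).2)
              (hsumE.mul_left M)
        _ = _ := by
            exact tsum_congr fun k => by
              rw [intervalIntegral.integral_const_mul, Xr_int_step]
    rw [zero_add, key, hS₂def]
    refine (tsum_congr fun k => ?_).symm
    have hfac : ((2*k+1).factorial : ℂ) = (((2*k : ℕ):ℂ) + 1) * ((2*k).factorial : ℂ) := by
      rw [Nat.factorial_succ]; push_cast; ring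
    have hne1 : (((2*k : ℕ):ℂ) + 1) ≠ 0 := Nat.cast_add_one_ne_zero _
    have hne2 : (((2*k).factorial : ℕ) : ℂ) ≠ 0 := Nat.cast_ne_zero.2 (2*k).factorial_ne_zero
    rw [hfac]
    field_simp
  have hE2' : ∀ x ∈ Icc a b, G₂ x = 1 + lam * ∫ s in x₀..x, f s ^ 2 * S₂ s := by
    intro x hx
    have key : (∫ s in x₀..x, f s ^ 2 * S₂ s)
        = ∑' k : ℕ, lam ^ k / ((2*k+1).factorial : ℂ) *
            (Xr f x₀ (2*k+1+1) x / (((2*k+1 : ℕ):ℂ) + 1)) := by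
      have hptw : ∀ s : ℝ, f s ^ 2 * S₂ s = ∑' k : ℕ, lam ^ k / ((2*k+1).factorial : ℂ) *
          (Xr f x₀ (2*k+1) s * (f s ^ 2) ^ ((-1:ℤ) ^ (2*k+1+1))) := by
        intro s
        simp only [hS₂def]
        rw [← tsum_mul_left]
        refine tsum_congr fun k => ?_
        have : ((-1:ℤ)) ^ (2*k+1+1) = 1 := by
          have h2 : 2*k+1+1 = 2*(k+1) := by ring
          rw [h2, neg_one_pow_two_mul]
        rw [this, zpow_one]; ring
      calc (∫ s in x₀..x, f s ^ 2 * S₂ s)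
          = ∫ s in x₀..x, ∑' k : ℕ, lam ^ k / ((2*k+1).factorial : ℂ) *
              (Xr f x₀ (2*k+1) s * (f s ^ 2) ^ ((-1:ℤ) ^ (2*k+1+1))) := by
            simp only [hptw]
        _ = ∑' k : ℕ, ∫ s in x₀..x, lam ^ k / ((2*k+1).factorial : ℂ) *
              (Xr f x₀ (2*k+1) s * (f s ^ 2) ^ ((-1:ℤ) ^ (2*k+1+1))) := by
            apply swap_sum_integral hx₀ hx
              (fun k => continuousOn_const.mul ((hXr (2*k+1)).1.mul (hg (2*k+1+1)).1))
              (fun k => hprod_bd k (2*k+1) (by omega) _ _ (hXrb (2*k+1)) (hg (2*k+1+1)).2)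
              (hsumO.mul_left M)
        _ = _ := by
            exact tsum_congr fun k => by
              rw [intervalIntegral.integral_const_mul, Xr_int_step]
    have hsum : Summable (fun k : ℕ => lam ^ k / ((2 * k).factorial : ℂ) * Xr f x₀ (2*k) x) :=
      Summable.of_norm_bounded hsumE (fun k => hb4 k x hx)
    simp only [hG₂def]
    show (∑' k : ℕ, lam ^ k / ((2 * k).factorial : ℂ) * Xr f x₀ (2*k) x) = _
    rw [hsum.tsum_eq_zero_add, key, ← tsum_mul_left]
    congr 1
    · simp [Xr_zero]
    · refine tsum_congr fun k => ?_
      have h2k : 2*(k+1) = 2*k+1+1 := by ring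
      rw [h2k]
      have hfac : ((2*k+1+1).factorial : ℂ) = (((2*k+1 : ℕ):ℂ) + 1) * ((2*k+1).factorial : ℂ) := by
        rw [Nat.factorial_succ]; push_cast; ring
      have hne1 : (((2*k+1 : ℕ):ℂ) + 1) ≠ 0 := Nat.cast_add_one_ne_zero _
      have hne2 : (((2*k+1).factorial : ℕ) : ℂ) ≠ 0 := Nat.cast_ne_zero.2 (2*k+1).factorial_ne_zero
      rw [hfac]
      field_simp
      ring
  -- definitions of the solutions
  set T : ℝ → ℂ := Set.indicator (Icc a b) (fun y => f y * S₁ y - f y) with hTdef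
  set u₁ : ℝ → ℂ := fun x => f x + T x with hu₁def
  set u₂ : ℝ → ℂ := fun x => if x ∈ Icc a b then f x * S₂ x else ((x:ℂ) - (x₀:ℂ)) / f x₀
    with hu₂def
  have hu₁Icc : ∀ x ∈ Icc a b, u₁ x = f x * S₁ x := by
    intro x hx
    simp only [hu₁def, hTdef, Set.indicator_of_mem hx]
    ring
  have hu₂Icc : ∀ x ∈ Icc a b, u₂ x = f x * S₂ x := by
    intro x hx; simp only [hu₂def, if_pos hx]
  -- uniform convergence
  have hUC1 : TendstoUniformlyOn
      (fun N x => ∑ k ∈ Finset.range (N + 1),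
        lam ^ k / ((2 * k).factorial : ℂ) * phiSys f x₀ (2 * k) x) u₁ atTop (Icc a b) := by
    have hU : TendstoUniformlyOn
        (fun N x => ∑ k ∈ Finset.range N,
          lam ^ k / ((2 * k).factorial : ℂ) * phiSys f x₀ (2 * k) x)
        (fun x => ∑' k : ℕ, lam ^ k / ((2 * k).factorial : ℂ) * phiSys f x₀ (2 * k) x)
        atTop (Icc a b) := by
      apply tendstoUniformlyOn_tsum_nat (hsumE.mul_left M0)
      intro k x hx
      rw [phiSys_even]
      exact hfprod_bd k (2*k) (by omega) _ (hXtb (2*k)) x hx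
    have heq : Set.EqOn
        (fun x => ∑' k : ℕ, lam ^ k / ((2 * k).factorial : ℂ) * phiSys f x₀ (2 * k) x)
        u₁ (Icc a b) := by
      intro x hx
      dsimp only
      calc (∑' k : ℕ, lam ^ k / ((2 * k).factorial : ℂ) * phiSys f x₀ (2 * k) x)
          = ∑' k : ℕ, f x * (lam ^ k / ((2 * k).factorial : ℂ) * Xt f x₀ (2*k) x) :=
            tsum_congr fun k => by rw [phiSys_even]; ring
        _ = f x * S₁ x := by rw [tsum_mul_left]
        _ = u₁ x := (hu₁Icc x hx).symm
    have hU' := hU.congr_right heq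
    intro v hv
    exact (tendsto_add_atTop_nat 1).eventually (hU' v hv)
  have hUC2 : TendstoUniformlyOn
      (fun N x => ∑ k ∈ Finset.range (N + 1),
        lam ^ k / ((2 * k + 1).factorial : ℂ) * phiSys f x₀ (2 * k + 1) x) u₂ atTop (Icc a b) := by
    have hU : TendstoUniformlyOn
        (fun N x => ∑ k ∈ Finset.range N,
          lam ^ k / ((2 * k + 1).factorial : ℂ) * phiSys f x₀ (2 * k + 1) x)
        (fun x => ∑' k : ℕ, lam ^ k / ((2 * k + 1).factorial : ℂ) * phiSys f x₀ (2 * k + 1) x)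
        atTop (Icc a b) := by
      apply tendstoUniformlyOn_tsum_nat (hsumO.mul_left M0)
      intro k x hx
      rw [phiSys_odd]
      exact hfprod_bd k (2*k+1) (by omega) _ (hXrb (2*k+1)) x hx
    have heq : Set.EqOn
        (fun x => ∑' k : ℕ, lam ^ k / ((2 * k + 1).factorial : ℂ) * phiSys f x₀ (2 * k + 1) x)
        u₂ (Icc a b) := by
      intro x hx
      dsimp only
      calc (∑' k : ℕ, lam ^ k / ((2 * k + 1).factorial : ℂ) * phiSys f x₀ (2 * k + 1) x)
          = ∑' k : ℕ, f x * (lam ^ k / ((2 * k + 1).factorial : ℂ) * Xr f x₀ (2*k+1) x) :=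
            tsum_congr fun k => by rw [phiSys_odd]; ring
        _ = f x * S₂ x := by rw [tsum_mul_left]
        _ = u₂ x := (hu₂Icc x hx).symm
    have hU' := hU.congr_right heq
    intro v hv
    exact (tendsto_add_atTop_nat 1).eventually (hU' v hv)
  -- derivatives within `Icc` at the base point
  have hfdW : HasDerivWithinAt f (derivWithin f (Icc a b) x₀) (Icc a b) x₀ :=
    ((hf.differentiableOn (by norm_num)) x₀ hx₀).hasDerivWithinAt
  have hw₁c : ContinuousOn (fun s => (f s ^ 2)⁻¹ * G₁ s) (Icc a b) := hf2ic.mul hG₁c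
  have hw₂c : ContinuousOn (fun s => (f s ^ 2)⁻¹ * G₂ s) (Icc a b) := hf2ic.mul hG₂c
  have hS₁dW : HasDerivWithinAt S₁ ((f x₀ ^ 2)⁻¹ * G₁ x₀) (Icc a b) x₀ :=
    ((prim_hasDerivWithinAt hw₁c hx₀).const_add 1).congr (fun y hy => hE1 y hy) (hE1 x₀ hx₀)
  have hS₂dW : HasDerivWithinAt S₂ ((f x₀ ^ 2)⁻¹ * G₂ x₀) (Icc a b) x₀ := by
    have h := ((prim_hasDerivWithinAt hw₂c hx₀).const_add 0).congr
      (fun y hy => hE1' y hy) (hE1' x₀ hx₀)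
    exact h
  -- derivative of T at x₀ is 0
  have hTin : HasDerivWithinAt T 0 (Icc a b) x₀ := by
    have base := (hfdW.mul hS₁dW).sub hfdW
    have hval : derivWithin f (Icc a b) x₀ * S₁ x₀ + f x₀ * ((f x₀ ^ 2)⁻¹ * G₁ x₀)
        - derivWithin f (Icc a b) x₀ = 0 := by
      rw [hS₁x₀, hG₁x₀]; ring
    rw [hval] at base
    exact base.congr (fun y hy => by simp only [hTdef, Set.indicator_of_mem hy]; rfl)
      (by simp only [hTdef, Set.indicator_of_mem hx₀]; rfl)
  have hTout : HasDerivWithinAt T 0 ((Icc a b)ᶜ) x₀ := by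
    refine (hasDerivWithinAt_const x₀ _ (0:ℂ)).congr
      (fun y hy => Set.indicator_of_notMem hy _) ?_
    simp only [hTdef, Set.indicator_of_mem hx₀]
    rw [hS₁x₀]; ring
  have hT : HasDerivAt T 0 x₀ := by
    have h := hTin.union hTout
    rw [Set.union_compl_self] at h
    exact hasDerivWithinAt_univ.1 h
  -- initial conditions for u₁
  have hu₁x₀ : u₁ x₀ = f x₀ := by rw [hu₁Icc x₀ hx₀, hS₁x₀, mul_one]
  have hu₁d : deriv u₁ x₀ = deriv f x₀ := by
    by_cases hdf : DifferentiableAt ℝ f x₀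
    · have h := (hdf.hasDerivAt.add hT).deriv
      rw [hu₁def]
      rw [show (fun x => f x + T x) = f + T from rfl, h, add_zero]
    · have hnd : ¬ DifferentiableAt ℝ u₁ x₀ := by
        intro h
        apply hdf
        have heq : (fun x => u₁ x - T x) = f := funext fun x => by
          simp only [hu₁def]; ring
        rw [← heq]
        exact h.sub hT.differentiableAt
      rw [deriv_zero_of_not_differentiableAt hnd, deriv_zero_of_not_differentiableAt hdf]
  -- initial conditions for u₂
  have hu₂x₀ : u₂ x₀ = 0 := by rw [hu₂Icc x₀ hx₀, hS₂x₀, mul_zero]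
  have hfx₀ := hf0 x₀ hx₀
  have hu₂dAt : HasDerivAt u₂ (1 / f x₀) x₀ := by
    have hin : HasDerivWithinAt u₂ (1 / f x₀) (Icc a b) x₀ := by
      have base := hfdW.mul hS₂dW
      have hval : derivWithin f (Icc a b) x₀ * S₂ x₀ + f x₀ * ((f x₀ ^ 2)⁻¹ * G₂ x₀)
          = 1 / f x₀ := by
        rw [hS₂x₀, hG₂x₀, sq]
        field_simp
        ring
      rw [hval] at base
      exact base.congr (fun y hy => hu₂Icc y hy) (hu₂Icc x₀ hx₀)
    have hout : HasDerivWithinAt u₂ (1 / f x₀) ((Icc a b)ᶜ) x₀ := by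
      have hre : HasDerivAt (fun x : ℝ => (x:ℂ)) 1 x₀ := by
        simpa using (hasDerivAt_id x₀).ofReal_comp
      have hlin : HasDerivAt (fun x : ℝ => ((x:ℂ) - (x₀:ℂ)) / f x₀) (1 / f x₀) x₀ := by
        simpa using (hre.sub_const ((x₀:ℝ):ℂ)).div_const (f x₀)
      refine hlin.hasDerivWithinAt.congr (fun y hy => ?_) ?_
      · simp only [hu₂def, if_neg hy]
      · rw [hu₂x₀]
        simp
    have h := hin.union hout
    rw [Set.union_compl_self] at h
    exact hasDerivWithinAt_univ.1 h
  have hu₂d : deriv u₂ x₀ = 1 / f x₀ := hu₂dAt.deriv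
  -- the differential equations
  have hODE1 : ∀ x ∈ Set.Ioo a b, deriv (deriv u₁) x - q x * u₁ x = lam * u₁ x := by
    have hE1'' : ∀ x ∈ Icc a b, S₁ x = (1:ℂ) + ∫ s in x₀..x, (f s ^ 2)⁻¹ * G₁ s := hE1
    exact ode_solution hx₀ hf hf0 hfq hS₁c hG₁c hE1'' hE2 hu₁Icc
  have hODE2 : ∀ x ∈ Set.Ioo a b, deriv (deriv u₂) x - q x * u₂ x = lam * u₂ x :=
    ode_solution hx₀ hf hf0 hfq hS₂c hG₂c hE1' hE2' hu₂Icc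
  exact ⟨u₁, u₂, hUC1, hUC2, hODE1, hODE2, hu₁x₀, hu₁d, hu₂x₀, hu₂d⟩
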